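/- Let m ≥ 1, let (ν_n) be Borel probability measures on ℝ^m converging weakly to the Dirac measure δ_a for some a ∈ ℝ^m, let M > 0, and let g_n : ℝ^m → ℝ be Borel measurable with |g_n(θ)| ≤ M for all θ and n. Let g : ℝ^m → ℝ be bounded, Borel measurable, and continuous at a, and assume g_n → g uniformly on every compact subset of ℝ^m. Then ∫ g_n dν_n → g(a) as n → ∞. -/

import Mathlib

open MeasureTheory Filter
open scoped NNReal ENNReal

/-- **Vanishing coupling error for bounded losses.**
Let `m ≥ 1`, let `(ν_n)` be Borel probability measures on `ℝ^m` converging weakly to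
`δ_a`, `M > 0`, and `g_n : ℝ^m → ℝ` Borel measurable with `|g_n θ| ≤ M` for all `θ, n`.
Let `g : ℝ^m → ℝ` be bounded, Borel measurable, continuous at `a`, with `g_n → g`
uniformly on every compact subset of `ℝ^m`.  Then `∫ g_n dν_n → g a`. -/
theorem gvi_bounded_losses_integral_tendsto
    (m : ℕ) (hm : 1 ≤ m)
    (ν : ℕ → ProbabilityMeasure (Fin m → ℝ))
    (a : Fin m → ℝ)
    (hν : Tendsto ν atTop
      (nhds (⟨Measure.dirac a, inferInstance⟩ : ProbabilityMeasure (Fin m → ℝ))))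
    (M : ℝ) (hM : 0 < M)
    (g' : ℕ → (Fin m → ℝ) → ℝ) (hg'meas : ∀ n, Measurable (g' n))
    (hg'bdd : ∀ n θ, |g' n θ| ≤ M)
    (g : (Fin m → ℝ) → ℝ) (hgbdd : ∃ C : ℝ, ∀ θ, |g θ| ≤ C)
    (hgmeas : Measurable g) (hgcont : ContinuousAt g a)
    (hunif : ∀ K : Set (Fin m → ℝ), IsCompact K → TendstoUniformlyOn g' g atTop K) :
    Tendsto (fun n => ∫ θ, g' n θ ∂(ν n : Measure (Fin m → ℝ))) atTop (nhds (g a)) := by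
  rw [Metric.tendsto_atTop]
  intro ε hε
  set ε' := ε / 4 with hε'def
  have hε' : 0 < ε' := by positivity
  obtain ⟨δ, hδ, hδball⟩ := Metric.continuousAt_iff.mp hgcont ε' hε'
  have hK : IsCompact (Metric.closedBall a δ) := isCompact_closedBall a δ
  have huc := (Metric.tendstoUniformlyOn_iff.mp (hunif _ hK)) ε' hε'
  set E : Set (Fin m → ℝ) := (Metric.ball a δ)ᶜ with hE
  have hEmeas : MeasurableSet E := (Metric.isOpen_ball.measurableSet).compl
  set C : ℝ := M + |g a| with hC
  have hCpos : 0 < C := by positivity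
  -- portmanteau: ν n E → dirac a E = 0
  have hfront : ((⟨Measure.dirac a, inferInstance⟩ :
      ProbabilityMeasure (Fin m → ℝ)) : Measure (Fin m → ℝ)) (frontier E) = 0 := by
    have hafr : a ∉ frontier E := by
      rw [hE, frontier_compl, Metric.isOpen_ball.frontier_eq]
      exact fun h => h.2 (Metric.mem_ball_self hδ)
    show Measure.dirac a (frontier E) = 0
    rw [Measure.dirac_apply' _ isClosed_frontier.measurableSet]
    simp [hafr]
  have hmeasE := ProbabilityMeasure.tendsto_measure_of_null_frontier_of_tendsto' hν hfront
  have hEzero : Measure.dirac a E = 0 := by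
    rw [Measure.dirac_apply' _ hEmeas]
    simp [hE, Metric.mem_ball_self hδ]
  replace hmeasE : Tendsto (fun i => (ν i : Measure (Fin m → ℝ)) E) atTop (nhds 0) := by
    convert hmeasE using 2
    exact hEzero.symm
  have hmeasR : Tendsto (fun n => ((ν n : Measure (Fin m → ℝ)) E).toReal) atTop (nhds 0) := by
    have := (ENNReal.tendsto_toReal (by simp)).comp hmeasE
    simpa [Function.comp_def] using this
  have hsmall : ∀ᶠ n in atTop, ((ν n : Measure (Fin m → ℝ)) E).toReal < ε' / C :=
    hmeasR.eventually (eventually_lt_nhds (by positivity))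
  obtain ⟨N, hN⟩ := (huc.and hsmall).exists_forall_of_atTop
  refine ⟨N, fun n hn => ?_⟩
  obtain ⟨hucn, hsmalln⟩ := hN n hn
  have hprob : IsProbabilityMeasure (ν n : Measure (Fin m → ℝ)) := (ν n).prop
  set B : (Fin m → ℝ) → ℝ := fun θ => 2 * ε' + E.indicator (fun _ => C) θ with hB
  have hpt : ∀ θ, |g' n θ - g a| ≤ B θ := by
    intro θ
    by_cases hθ : θ ∈ Metric.ball a δ
    · have h1 : |g θ - g a| < ε' := by
        have := hδball (Metric.mem_ball.mp hθ)
        rwa [Real.dist_eq] at this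
      have h2 : |g' n θ - g θ| < ε' := by
        have := hucn θ (Metric.ball_subset_closedBall hθ)
        rwa [Real.dist_eq, abs_sub_comm] at this
      have h3 : |g' n θ - g a| ≤ |g' n θ - g θ| + |g θ - g a| := abs_sub_le _ _ _
      have hEθ : θ ∉ E := by simpa [hE] using hθ
      simp only [hB, Set.indicator_of_notMem hEθ, add_zero]
      linarith
    · have h1 : |g' n θ - g a| ≤ M + |g a| := by
        calc |g' n θ - g a| ≤ |g' n θ| + |g a| := abs_sub _ _
        _ ≤ M + |g a| := by linarith [hg'bdd n θ]
      have hEθ : θ ∈ E := by simpa [hE] using hθ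
      simp only [hB, Set.indicator_of_mem hEθ]
      rw [hC]
      linarith
  have hintg : Integrable (g' n) (ν n : Measure (Fin m → ℝ)) :=
    (integrable_const M).mono' (hg'meas n).aestronglyMeasurable
      (Filter.Eventually.of_forall fun θ => by
        simpa [Real.norm_eq_abs] using hg'bdd n θ)
  have hint : Integrable (fun θ => g' n θ - g a) (ν n : Measure (Fin m → ℝ)) :=
    hintg.sub (integrable_const _)
  have hintB : Integrable B (ν n : Measure (Fin m → ℝ)) :=
    (integrable_const _).add ((integrable_const C).indicator hEmeas)
  have h0 : ∫ θ, (g' n θ - g a) ∂(ν n : Measure (Fin m → ℝ)) =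
      ∫ θ, g' n θ ∂(ν n : Measure (Fin m → ℝ)) - g a := by
    rw [integral_sub hintg (integrable_const _), integral_const]
    simp
  have hBint : ∫ θ, B θ ∂(ν n : Measure (Fin m → ℝ)) =
      2 * ε' + ((ν n : Measure (Fin m → ℝ)) E).toReal * C := by
    rw [hB, integral_add (integrable_const _) ((integrable_const C).indicator hEmeas),
      integral_const, integral_indicator_const _ hEmeas]
    simp [smul_eq_mul]
    exact Or.inl rfl
  have key : |∫ θ, g' n θ ∂(ν n : Measure (Fin m → ℝ)) - g a| ≤
      2 * ε' + ((ν n : Measure (Fin m → ℝ)) E).toReal * C := by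
    rw [← h0, ← hBint]
    calc |∫ θ, (g' n θ - g a) ∂(ν n : Measure (Fin m → ℝ))|
        ≤ ∫ θ, |g' n θ - g a| ∂(ν n : Measure (Fin m → ℝ)) :=
          by simpa [Real.norm_eq_abs] using
            norm_integral_le_integral_norm (μ := (ν n : Measure (Fin m → ℝ)))
              (fun θ => g' n θ - g a)
      _ ≤ ∫ θ, B θ ∂(ν n : Measure (Fin m → ℝ)) :=
          integral_mono hint.abs hintB hpt
  rw [Real.dist_eq]
  have hlt : ((ν n : Measure (Fin m → ℝ)) E).toReal * C < ε' := by
    have := (mul_lt_mul_of_pos_right hsmalln hCpos)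
    rwa [div_mul_cancel₀ _ (ne_of_gt hCpos)] at this
  calc |∫ θ, g' n θ ∂(ν n : Measure (Fin m → ℝ)) - g a|
      ≤ 2 * ε' + ((ν n : Measure (Fin m → ℝ)) E).toReal * C := key
    _ < 2 * ε' + ε' := by linarith
    _ < ε := by rw [hε'def]; linarith
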